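/- Let μ be a probability measure on ℝ × ℝ (the joint law of the source X and the private information θ), and let κ₁ and κ₂ be Markov kernels from ℝ × ℝ to ℝ (conditional laws of the transmitter output Y given (X, θ)). For c ∈ [0, 1] let κ_c = c•κ₁ + (1−c)•κ₂ be their pointwise convex combination, and define D_C(κ) = ⨅_{h : ℝ → ℝ measurable} ∫ (x − h(y))² d(μ ⊗ κ)((x, θ), y), the infimum taken over all measurable decoders, with the integral valued in [0, ∞]. Then D_C(κ_c) ≥ c·D_C(κ₁) + (1 − c)·D_C(κ₂); i.e., the distortion D_C is a concave function of the encoder's conditional distribution. -/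

import Mathlib

open MeasureTheory ProbabilityTheory
open scoped ENNReal

/-- `D_C(κ)`: the minimum mean squared error in reconstructing the source `x` (first
coordinate) from the transmitter output `y`, over all measurable decoders `h`, when the
source/private-information pair has law `μ` and the encoder is the kernel `κ`. -/
noncomputable def distortionC (μ : Measure (ℝ × ℝ)) (κ : Kernel (ℝ × ℝ) ℝ) : ℝ≥0∞ :=
  ⨅ (h : ℝ → ℝ) (_ : Measurable h),
    ∫⁻ p, ENNReal.ofReal ((p.1.1 - h p.2) ^ 2) ∂(μ ⊗ₘ κ)

/-- Concavity of the distortion `D_C` in the encoder's conditional distribution: for the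
pointwise convex combination `κc = c•κ₁ + (1−c)•κ₂` one has
`D_C(κc) ≥ c·D_C(κ₁) + (1−c)·D_C(κ₂)`. -/
theorem distortionC_concave (μ : Measure (ℝ × ℝ)) [IsProbabilityMeasure μ]
    (κ₁ κ₂ κc : Kernel (ℝ × ℝ) ℝ) [IsMarkovKernel κ₁] [IsMarkovKernel κ₂]
    (c : ℝ) (hc0 : 0 ≤ c) (hc1 : c ≤ 1)
    (hκc : ∀ p : ℝ × ℝ, κc p = ENNReal.ofReal c • κ₁ p + ENNReal.ofReal (1 - c) • κ₂ p) :
    ENNReal.ofReal c * distortionC μ κ₁ + ENNReal.ofReal (1 - c) * distortionC μ κ₂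
      ≤ distortionC μ κc := by
  have hc1' : (0:ℝ) ≤ 1 - c := by linarith
  have hκcM : IsMarkovKernel κc := by
    refine ⟨fun p => ⟨?_⟩⟩
    rw [hκc]
    simp only [Measure.add_apply, Measure.smul_apply, measure_univ, smul_eq_mul, mul_one]
    rw [← ENNReal.ofReal_add hc0 hc1']
    norm_num
  rw [distortionC, distortionC, distortionC]
  refine le_iInf fun h => le_iInf fun hh => ?_
  have hf : Measurable fun p : (ℝ × ℝ) × ℝ => ENNReal.ofReal ((p.1.1 - h p.2) ^ 2) := by
    exact ((measurable_fst.fst.sub (hh.comp measurable_snd)).pow_const 2).ennreal_ofReal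
  rw [Measure.lintegral_compProd hf]
  have key : ∀ a : ℝ × ℝ,
      ∫⁻ y, ENNReal.ofReal ((a.1 - h y) ^ 2) ∂(κc a)
        = ENNReal.ofReal c * ∫⁻ y, ENNReal.ofReal ((a.1 - h y) ^ 2) ∂(κ₁ a)
          + ENNReal.ofReal (1 - c) * ∫⁻ y, ENNReal.ofReal ((a.1 - h y) ^ 2) ∂(κ₂ a) := by
    intro a
    rw [hκc, lintegral_add_measure, lintegral_smul_measure, lintegral_smul_measure]
    simp only [smul_eq_mul]
  simp_rw [key]
  have hm1 : Measurable fun a : ℝ × ℝ =>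
      ∫⁻ y, ENNReal.ofReal ((a.1 - h y) ^ 2) ∂(κ₁ a) :=
    Measurable.lintegral_kernel_prod_right
      ((measurable_fst.fst.sub (hh.comp measurable_snd)).pow_const 2).ennreal_ofReal
  have hm2 : Measurable fun a : ℝ × ℝ =>
      ∫⁻ y, ENNReal.ofReal ((a.1 - h y) ^ 2) ∂(κ₂ a) :=
    Measurable.lintegral_kernel_prod_right
      ((measurable_fst.fst.sub (hh.comp measurable_snd)).pow_const 2).ennreal_ofReal
  rw [lintegral_add_left (hm1.const_mul _), lintegral_const_mul _ hm1,
    lintegral_const_mul _ hm2, ← Measure.lintegral_compProd hf, ← Measure.lintegral_compProd hf]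
  exact add_le_add
    (mul_le_mul_right (iInf₂_le h hh) _)
    (mul_le_mul_right (iInf₂_le h hh) _)
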